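/- In the free group F₂ on α, β, for every nonnegative integer r, the number of elements of word length exactly 2r+2 that are conjugates of a power of α, a power of β, or a power of αβ is 8·3^r. -/

import Mathlib

abbrev F2 := FreeGroup (Fin 2)

def α : F2 := FreeGroup.of 0

def β : F2 := FreeGroup.of 1

open FreeGroup List
abbrev LL := Fin 2 × Bool
abbrev iv (x : LL) : LL := (x.1, !x.2)
abbrev IsRed (l : List LL) : Prop := List.Chain' (fun a b => a ≠ iv b) l

lemma cancel_iff (a b : LL) : (a.1 = b.1 ∧ a.2 = !b.2) ↔ a = iv b := by
  cases a; cases b; simp [iv, Prod.ext_iff]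

lemma isRed_reduce (l : List LL) : IsRed (reduce l) := by
  induction l with
  | nil => exact List.isChain_nil
  | cons x l ih =>
    rw [reduce.cons]
    cases h : reduce l with
    | nil => exact List.isChain_singleton x
    | cons hd tl =>
      rw [h] at ih
      by_cases hc : x.1 = hd.1 ∧ x.2 = !hd.2
      · simp only [if_pos hc]
        exact ih.tail
      · simp only [if_neg hc]
        exact List.isChain_cons_cons.2 ⟨fun he => hc ((cancel_iff x hd).2 he), ih⟩

lemma reduce_eq_self {l : List LL} (h : IsRed l) : reduce l = l := by
  induction l with
  | nil => rfl
  | cons x l ih =>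
    rw [reduce.cons, ih h.tail]
    cases l with
    | nil => rfl
    | cons hd tl =>
      have hx : x ≠ iv hd := (List.isChain_cons_cons.1 h).1
      simp only [if_neg (fun hc => hx ((cancel_iff x hd).1 hc))]

lemma isRed_toWord (g : FreeGroup (Fin 2)) : IsRed (toWord g) := by
  have := isRed_reduce (toWord g)
  rwa [reduce_toWord] at this

lemma toWord_mk_self {l : List LL} (h : IsRed l) : (FreeGroup.mk l).toWord = l := by
  rw [toWord_mk, reduce_eq_self h]

lemma norm_mk_self {l : List LL} (h : IsRed l) : (FreeGroup.mk l).norm = l.length := by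
  rw [FreeGroup.norm, toWord_mk_self h]

lemma isRed_invRev {l : List LL} (h : IsRed l) : IsRed (invRev l) := by
  have : reduce (invRev l) = invRev l := by rw [reduce_invRev, reduce_eq_self h]
  have h2 := isRed_reduce (invRev l)
  rwa [this] at h2

lemma invRev_cons (x : LL) (l : List LL) : invRev (x :: l) = invRev l ++ [iv x] := by
  simp [invRev, iv]

lemma head?_invRev (l : List LL) : (invRev l).head? = l.getLast?.map iv := by
  rw [invRev, List.head?_reverse, List.getLast?_map]

def cw : Fin 8 → List LL
  | 0 => [(0, true)]
  | 1 => [(0, false)]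
  | 2 => [(1, true)]
  | 3 => [(1, false)]
  | 4 => [(0, true), (1, true)]
  | 5 => [(1, true), (0, true)]
  | 6 => [(1, false), (0, false)]
  | 7 => [(0, false), (1, false)]

def gam (i : Fin 8) : FreeGroup (Fin 2) := FreeGroup.mk (cw i)

def cp (i : Fin 8) : ℕ → List LL
  | 0 => []
  | k + 1 => cw i ++ cp i k

lemma mk_cp (i : Fin 8) (k : ℕ) : FreeGroup.mk (cp i k) = gam i ^ k := by
  induction k with
  | zero => rfl
  | succ k ih => rw [pow_succ', cp, ← mul_mk, ih]; rfl

lemma cp_length (i : Fin 8) (k : ℕ) : (cp i k).length = k * (cw i).length := by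
  induction k with
  | zero => simp [cp]
  | succ k ih => simp [cp, ih]; ring

def fst (i : Fin 8) : LL := (cw i).head!
def lst (i : Fin 8) : LL := (cw i).getLast!

lemma cw_ne_nil (i : Fin 8) : cw i ≠ [] := by fin_cases i <;> simp [cw]

lemma head?_cw (i : Fin 8) : (cw i).head? = some (fst i) := by fin_cases i <;> rfl

lemma getLast?_cw (i : Fin 8) : (cw i).getLast? = some (lst i) := by fin_cases i <;> rfl

lemma cp_ne_nil (i : Fin 8) {k : ℕ} (hk : k ≠ 0) : cp i k ≠ [] := by
  cases k with
  | zero => exact absurd rfl hk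
  | succ k => simp [cp, cw_ne_nil i]

lemma head?_cp (i : Fin 8) {k : ℕ} (hk : k ≠ 0) : (cp i k).head? = some (fst i) := by
  cases k with
  | zero => exact absurd rfl hk
  | succ k => rw [cp, List.head?_append_of_ne_nil _ (cw_ne_nil i), head?_cw]

lemma getLast?_cp (i : Fin 8) {k : ℕ} (hk : k ≠ 0) : (cp i k).getLast? = some (lst i) := by
  induction k with
  | zero => exact absurd rfl hk
  | succ k ih =>
    rw [cp]
    by_cases h : k = 0
    · subst h; simp only [cp, List.append_nil]; exact getLast?_cw i
    · rw [List.getLast?_append_of_ne_nil _ (cp_ne_nil i h)]; exact ih h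

lemma isRed_cw (i : Fin 8) : IsRed (cw i) := by
  fin_cases i <;> simp [cw, List.Chain', List.isChain_cons_cons, List.isChain_singleton] <;> decide

lemma lst_fst (i : Fin 8) : lst i ≠ iv (fst i) := by
  fin_cases i <;> simp [lst, fst, cw] <;> decide

lemma isRed_cp (i : Fin 8) (k : ℕ) : IsRed (cp i k) := by
  induction k with
  | zero => exact List.isChain_nil
  | succ k ih =>
    rw [cp]
    refine (isRed_cw i).append ih ?_
    intro x hx y hy
    rw [Option.mem_def, getLast?_cw, Option.some_inj] at hx
    by_cases h : k = 0
    · subst h; simp [cp] at hy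
    · rw [Option.mem_def, head?_cp i h, Option.some_inj] at hy
      rw [← hx, ← hy]; exact lst_fst i

abbrev F2' := FreeGroup (Fin 2)

def bad (i : Fin 8) : Finset LL := {iv (fst i), lst i}

lemma strip (i : Fin 8) (x : LL) (hx : x ∈ bad i) :
    ∃ j : Fin 8, (cw j).length = (cw i).length ∧
      FreeGroup.mk [x] * gam i * (FreeGroup.mk [x])⁻¹ = gam j := by
  have hmk : ∀ (y : LL) (j : Fin 8),
      FreeGroup.reduce ([y] ++ cw i ++ invRev [y]) = FreeGroup.reduce (cw j) →
      FreeGroup.mk [y] * gam i * (FreeGroup.mk [y])⁻¹ = gam j := by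
    intro y j h
    rw [gam, gam, inv_mk, mul_mk, mul_mk]
    exact FreeGroup.reduce.exact h
  fin_cases i <;>
    (simp only [bad, Finset.mem_insert, Finset.mem_singleton] at hx; rcases hx with hx | hx) <;>
    subst hx
  · exact ⟨0, rfl, hmk _ 0 (by decide)⟩
  · exact ⟨0, rfl, hmk _ 0 (by decide)⟩
  · exact ⟨1, rfl, hmk _ 1 (by decide)⟩
  · exact ⟨1, rfl, hmk _ 1 (by decide)⟩
  · exact ⟨2, rfl, hmk _ 2 (by decide)⟩
  · exact ⟨2, rfl, hmk _ 2 (by decide)⟩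
  · exact ⟨3, rfl, hmk _ 3 (by decide)⟩
  · exact ⟨3, rfl, hmk _ 3 (by decide)⟩
  · exact ⟨5, rfl, hmk _ 5 (by decide)⟩
  · exact ⟨5, rfl, hmk _ 5 (by decide)⟩
  · exact ⟨4, rfl, hmk _ 4 (by decide)⟩
  · exact ⟨4, rfl, hmk _ 4 (by decide)⟩
  · exact ⟨7, rfl, hmk _ 7 (by decide)⟩
  · exact ⟨7, rfl, hmk _ 7 (by decide)⟩
  · exact ⟨6, rfl, hmk _ 6 (by decide)⟩
  · exact ⟨6, rfl, hmk _ 6 (by decide)⟩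

lemma descent_aux (n : ℕ) : ∀ (w : F2') (i : Fin 8) (k : ℕ), w.norm ≤ n →
    ∃ (l : List LL) (j : Fin 8), IsRed l ∧ (∀ x ∈ l.getLast?, x ∉ bad j) ∧
      (cw j).length = (cw i).length ∧
      w * gam i ^ k * w⁻¹ = FreeGroup.mk l * gam j ^ k * (FreeGroup.mk l)⁻¹ := by
  induction n with
  | zero =>
    intro w i k hw
    have : w = 1 := FreeGroup.norm_eq_zero.1 (Nat.le_zero.1 hw)
    exact ⟨[], i, List.isChain_nil, by simp, rfl, by simp [this, FreeGroup.one_eq_mk]⟩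
  | succ n ih =>
    intro w i k hw
    cases hl : w.toWord.getLast? with
    | none =>
      have : w = 1 := by
        rw [List.getLast?_eq_none_iff] at hl
        rw [← FreeGroup.norm_eq_zero, FreeGroup.norm, hl]
        rfl
      exact ⟨[], i, List.isChain_nil, by simp, rfl, by simp [this, FreeGroup.one_eq_mk]⟩
    | some x =>
      have hnil : w.toWord ≠ [] := by
        intro h; rw [h] at hl; exact absurd hl (by simp)
      by_cases hx : x ∈ bad i
      · -- strip the last letter
        obtain ⟨j', hlen', hconj⟩ := strip i x hx
        set l₂ := w.toWord.dropLast with hl₂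
        have hww : w = FreeGroup.mk l₂ * FreeGroup.mk [x] := by
          rw [mul_mk]
          conv_lhs => rw [← FreeGroup.mk_toWord (x := w)]
          congr 1
          have hxl : w.toWord.getLast hnil = x := by
            rw [List.getLast?_eq_getLast hnil, Option.some_inj] at hl
            exact hl
          rw [hl₂, ← hxl]
          exact (List.dropLast_append_getLast hnil).symm
        have hnorm : (FreeGroup.mk l₂).norm ≤ n := by
          calc (FreeGroup.mk l₂).norm ≤ l₂.length := FreeGroup.norm_mk_le
          _ = w.toWord.length - 1 := by rw [hl₂, List.length_dropLast]
          _ ≤ n := by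
            have : w.toWord.length ≤ n + 1 := hw
            have : w.toWord.length ≠ 0 := by simpa using hnil
            omega
        have hconjk : FreeGroup.mk [x] * gam i ^ k * (FreeGroup.mk [x])⁻¹ = gam j' ^ k := by
          rw [← conj_pow, hconj]
        obtain ⟨l, j, h1, h2, h3, h4⟩ := ih (FreeGroup.mk l₂) j' k hnorm
        refine ⟨l, j, h1, h2, h3.trans hlen', ?_⟩
        rw [hww]
        calc FreeGroup.mk l₂ * FreeGroup.mk [x] * gam i ^ k *
              (FreeGroup.mk l₂ * FreeGroup.mk [x])⁻¹
            = FreeGroup.mk l₂ * (FreeGroup.mk [x] * gam i ^ k * (FreeGroup.mk [x])⁻¹) *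
              (FreeGroup.mk l₂)⁻¹ := by group
          _ = FreeGroup.mk l₂ * gam j' ^ k * (FreeGroup.mk l₂)⁻¹ := by rw [hconjk]
          _ = _ := h4
      · refine ⟨w.toWord, i, isRed_toWord w, ?_, rfl, by rw [FreeGroup.mk_toWord]⟩
        intro y hy
        rw [Option.mem_def, hl, Option.some_inj] at hy
        rwa [← hy]

lemma taut_isRed {l : List LL} {i : Fin 8} {k : ℕ} (hk : k ≠ 0)
    (hl : IsRed l) (hlast : ∀ x ∈ l.getLast?, x ∉ bad i) :
    IsRed (l ++ cp i k ++ invRev l) := by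
  have hbad : ∀ x ∈ l.getLast?, x ≠ iv (fst i) ∧ x ≠ lst i := by
    intro x hx
    have := hlast x hx
    simp [bad] at this
    exact this
  refine List.IsChain.append (List.IsChain.append hl (isRed_cp i k) ?_) (isRed_invRev hl) ?_
  · intro x hx y hy
    rw [Option.mem_def, head?_cp i hk, Option.some_inj] at hy
    rw [← hy]
    exact (hbad x hx).1
  · intro x hx y hy
    rw [List.getLast?_append_of_ne_nil _ (cp_ne_nil i hk), Option.mem_def,
      getLast?_cp i hk, Option.some_inj] at hx
    rw [Option.mem_def, head?_invRev] at hy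
    rcases hz : l.getLast? with _ | z
    · rw [hz] at hy; exact absurd hy (by simp)
    · rw [hz] at hy
      simp only [Option.map_some] at hy
      have hzb := hbad z (by rw [hz]; rfl)
      rw [← hx, ← Option.some_inj.1 hy]
      intro hcon
      apply hzb.2
      have h2 : iv (iv z) = z := by cases z; simp [iv]
      rw [← h2, ← hcon]

lemma phi_toWord {l : List LL} {i : Fin 8} {k : ℕ} (hk : k ≠ 0)
    (hl : IsRed l) (hlast : ∀ x ∈ l.getLast?, x ∉ bad i) :
    (FreeGroup.mk l * gam i ^ k * (FreeGroup.mk l)⁻¹).toWord = l ++ cp i k ++ invRev l := by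
  rw [← mk_cp, inv_mk, mul_mk, mul_mk, toWord_mk_self (taut_isRed hk hl hlast)]

lemma phi_norm {l : List LL} {i : Fin 8} {k : ℕ} (hk : k ≠ 0)
    (hl : IsRed l) (hlast : ∀ x ∈ l.getLast?, x ∉ bad i) :
    (FreeGroup.mk l * gam i ^ k * (FreeGroup.mk l)⁻¹).norm
      = 2 * l.length + k * (cw i).length := by
  rw [FreeGroup.norm, phi_toWord hk hl hlast]
  simp [cp_length, invRev_length]
  ring

-- words of length exactly t+1, reduced, not ending (incl. via head since built backwards) in b
def Tt (b : Finset LL) : ℕ → Finset (List LL)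
  | 0 => (Finset.univ.filter (fun x : LL => x ∉ b)).image (fun x => [x])
  | t + 1 => (Tt b t).biUnion
      (fun l => (Finset.univ.filter (fun x : LL => x ≠ iv l.headI)).image (fun x => x :: l))

lemma mem_Tt (b : Finset LL) (t : ℕ) (l : List LL) :
    l ∈ Tt b t ↔ IsRed l ∧ l.length = t + 1 ∧ ∀ x ∈ l.getLast?, x ∉ b := by
  induction t generalizing l with
  | zero =>
    simp only [Tt, Finset.mem_image, Finset.mem_filter, Finset.mem_univ, true_and]
    constructor
    · rintro ⟨x, hx, rfl⟩
      exact ⟨List.isChain_singleton x, rfl, by simpa using hx⟩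
    · rintro ⟨h1, h2, h3⟩
      match l, h2 with
      | [x], _ => exact ⟨x, by simpa using h3, rfl⟩
  | succ t ih =>
    simp only [Tt, Finset.mem_biUnion, Finset.mem_image, Finset.mem_filter, Finset.mem_univ,
      true_and]
    constructor
    · rintro ⟨l₀, hl₀, x, hx, rfl⟩
      obtain ⟨h1, h2, h3⟩ := (ih l₀).1 hl₀
      have hne : l₀ ≠ [] := by intro h; rw [h] at h2; simp at h2
      match l₀, hne with
      | y :: l₁, _ =>
        refine ⟨List.isChain_cons_cons.2 ⟨by simpa using hx, h1⟩, by simpa using h2, ?_⟩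
        intro z hz
        rw [List.getLast?_cons_cons] at hz
        exact h3 z hz
    · rintro ⟨h1, h2, h3⟩
      match l, h2 with
      | x :: y :: l₁, h2 =>
        refine ⟨y :: l₁, (ih _).2 ⟨h1.tail, by simpa using h2, ?_⟩, x, ?_, rfl⟩
        · intro z hz
          exact h3 z (by rw [List.getLast?_cons_cons]; exact hz)
        · simpa using (List.isChain_cons_cons.1 h1).1
      | [x], h2 => simp at h2

lemma card_filter_not_mem (b : Finset LL) :
    (Finset.univ.filter (fun x : LL => x ∉ b)).card = 4 - b.card := by
  have h : (Finset.univ.filter (fun x : LL => x ∉ b)) = bᶜ := by ext x; simp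
  rw [h, Finset.card_compl]
  rfl

lemma card_Tt (b : Finset LL) (hb : b.card = 2) (t : ℕ) : (Tt b t).card = 2 * 3 ^ t := by
  induction t with
  | zero =>
    rw [Tt, Finset.card_image_of_injective _ (fun x y h => by simpa using h),
      card_filter_not_mem, hb]
    rfl
  | succ t ih =>
    have hdisj : ∀ l₁ ∈ Tt b t, ∀ l₂ ∈ Tt b t, l₁ ≠ l₂ →
        Disjoint ((Finset.univ.filter (fun x : LL => x ≠ iv l₁.headI)).image (fun x => x :: l₁))
          ((Finset.univ.filter (fun x : LL => x ≠ iv l₂.headI)).image (fun x => x :: l₂)) := by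
      intro l₁ h₁ l₂ h₂ hne
      rw [Finset.disjoint_left]
      rintro a ha₁ ha₂
      simp only [Finset.mem_image, Finset.mem_filter] at ha₁ ha₂
      obtain ⟨x, _, rfl⟩ := ha₁
      obtain ⟨y, _, hy⟩ := ha₂
      exact hne (by simpa using congrArg List.tail hy.symm)
    have hcard : ∀ l ∈ Tt b t,
        ((Finset.univ.filter (fun x : LL => x ≠ iv l.headI)).image (fun x => x :: l)).card = 3 := by
      intro l _
      rw [Finset.card_image_of_injective _ (fun x y h => by simpa using h),
        Finset.filter_ne', Finset.card_erase_of_mem (Finset.mem_univ _)]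
      rfl
    rw [Tt, Finset.card_biUnion hdisj, Finset.sum_congr rfl hcard, Finset.sum_const, ih]
    ring

def VS (b : Finset LL) (r : ℕ) : Finset (List LL) :=
  {[]} ∪ (Finset.range r).biUnion (Tt b)

lemma mem_VS (b : Finset LL) (r : ℕ) (l : List LL) :
    l ∈ VS b r ↔ IsRed l ∧ l.length ≤ r ∧ ∀ x ∈ l.getLast?, x ∉ b := by
  simp only [VS, Finset.mem_union, Finset.mem_singleton, Finset.mem_biUnion, Finset.mem_range,
    mem_Tt]
  constructor
  · rintro (rfl | ⟨t, ht, h1, h2, h3⟩)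
    · exact ⟨List.isChain_nil, by simp, by simp⟩
    · exact ⟨h1, by omega, h3⟩
  · rintro ⟨h1, h2, h3⟩
    rcases Nat.eq_zero_or_pos l.length with h | h
    · left; exact List.length_eq_zero_iff.1 h
    · right; exact ⟨l.length - 1, by omega, h1, by omega, h3⟩

lemma card_VS (b : Finset LL) (hb : b.card = 2) (r : ℕ) : (VS b r).card = 3 ^ r := by
  induction r with
  | zero =>
    rw [VS]
    simp
  | succ r ih =>
    have : VS b (r + 1) = VS b r ∪ Tt b r := by
      rw [VS, VS, Finset.range_add_one, Finset.biUnion_insert, Finset.union_comm ((Tt b) r),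
        Finset.union_assoc]
    rw [this, Finset.card_union_of_disjoint, ih, card_Tt b hb]
    · ring
    · rw [Finset.disjoint_left]
      intro l hl₁ hl₂
      have h1 := ((mem_VS b r l).1 hl₁).2.1
      have h2 := ((mem_Tt b r l).1 hl₂).2.1
      omega

lemma not_core_conj {i i' : Fin 8} {k k' : ℕ} (hk : k ≠ 0) (hk' : k' ≠ 0)
    {x : LL} {l' : List LL} :
    cp i k ≠ (x :: l') ++ cp i' k' ++ invRev (x :: l') := by
  intro h
  have hhead : fst i = x := by
    have := congrArg List.head? h
    rw [head?_cp i hk] at this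
    simp at this
    exact this
  have hlast : lst i = iv x := by
    have := congrArg List.getLast? h
    rw [getLast?_cp i hk, _root_.invRev_cons] at this
    rw [List.getLast?_append_of_ne_nil _ (by simp : invRev l' ++ [iv x] ≠ []),
      List.getLast?_append_of_ne_nil _ (by simp : ([iv x] : List LL) ≠ [])] at this
    simpa using this
  exact lst_fst i (by rw [hhead]; exact hlast)

def pat (i : Fin 8) : List LL := (cw i ++ cw i).take 2

lemma cp_take2 {i : Fin 8} {k : ℕ} (hk : k ≠ 0) (h2 : 2 ≤ k * (cw i).length) :
    (cp i k).take 2 = pat i := by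
  match k, hk with
  | 1, _ =>
    have : 2 ≤ (cw i).length := by simpa using h2
    fin_cases i <;> first
      | (exfalso; revert this; decide)
      | (simp [cp, pat, cw])
  | (k + 2), _ =>
    show (cw i ++ cp i (k+1)).take 2 = pat i
    rw [show cp i (k+1) = cw i ++ cp i k from rfl]
    fin_cases i <;> simp [pat, cw]

lemma pat_inj : ∀ i j : Fin 8, pat i = pat j → i = j := by decide

lemma inj_lists : ∀ (l l' : List LL) (i i' : Fin 8) (k k' : ℕ), k ≠ 0 → k' ≠ 0 →
    2 ≤ k * (cw i).length → 2 ≤ k' * (cw i').length →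
    l ++ cp i k ++ invRev l = l' ++ cp i' k' ++ invRev l' → i = i' ∧ l = l'
  | [], [], i, i', k, k', hk, hk', h2, h2', h => by
    simp only [invRev, List.map_nil, List.reverse_nil, List.append_nil, List.nil_append] at h
    refine ⟨pat_inj i i' ?_, rfl⟩
    rw [← cp_take2 hk h2, ← cp_take2 hk' h2', h]
  | [], x' :: l₂', i, i', k, k', hk, hk', h2, h2', h => by
    exfalso
    apply not_core_conj hk hk' (x := x') (l' := l₂') (i' := i')
    simpa using h
  | x :: l₂, [], i, i', k, k', hk, hk', h2, h2', h => by
    exfalso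
    simp only [invRev, List.map_nil, List.reverse_nil, List.append_nil, List.nil_append] at h
    exact not_core_conj hk' hk h.symm
  | x :: l₂, x' :: l₂', i, i', k, k', hk, hk', h2, h2', h => by
    have hx : x = x' := by
      have := congrArg List.head? h
      simpa using this
    subst hx
    have htail : l₂ ++ cp i k ++ invRev l₂ = l₂' ++ cp i' k' ++ invRev l₂' := by
      have ht := congrArg List.tail h
      simp only [List.cons_append, List.tail_cons] at ht
      have ht2 : (l₂ ++ cp i k ++ invRev l₂) ++ [iv x] =
          (l₂' ++ cp i' k' ++ invRev l₂') ++ [iv x] := by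
        simpa [_root_.invRev_cons, List.append_assoc] using ht
      exact List.append_cancel_right ht2
    obtain ⟨hi, hl⟩ := inj_lists l₂ l₂' i i' k k' hk hk' h2 h2' htail
    exact ⟨hi, by rw [hl]⟩


lemma gam0 : gam 0 = α := rfl
lemma gam1 : gam 1 = α⁻¹ := by
  rw [show α = FreeGroup.mk [((0 : Fin 2), true)] from rfl, FreeGroup.inv_mk]; rfl
lemma gam2 : gam 2 = β := rfl
lemma gam3 : gam 3 = β⁻¹ := by
  rw [show β = FreeGroup.mk [((1 : Fin 2), true)] from rfl, FreeGroup.inv_mk]; rfl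
lemma gam4 : gam 4 = α * β := by
  rw [show α = FreeGroup.mk [((0 : Fin 2), true)] from rfl,
    show β = FreeGroup.mk [((1 : Fin 2), true)] from rfl, FreeGroup.mul_mk]; rfl
lemma gam5 : gam 5 = β * α := by
  rw [show α = FreeGroup.mk [((0 : Fin 2), true)] from rfl,
    show β = FreeGroup.mk [((1 : Fin 2), true)] from rfl, FreeGroup.mul_mk]; rfl
lemma gam6 : gam 6 = (α * β)⁻¹ := by rw [← gam4, gam, gam, FreeGroup.inv_mk]; rfl
lemma gam7 : gam 7 = (β * α)⁻¹ := by rw [← gam5, gam, gam, FreeGroup.inv_mk]; rfl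

lemma card_bad (i : Fin 8) : (bad i).card = 2 := by fin_cases i <;> decide

lemma cw_len (i : Fin 8) : (cw i).length = 1 ∨ (cw i).length = 2 := by fin_cases i <;> decide

def Idx (r : ℕ) : Finset (Fin 8 × List LL) :=
  Finset.univ.biUnion fun i => (VS (bad i) r).image fun l => (i, l)

lemma mem_Idx {r : ℕ} {p : Fin 8 × List LL} : p ∈ Idx r ↔ p.2 ∈ VS (bad p.1) r := by
  obtain ⟨i, l⟩ := p
  simp only [Idx, Finset.mem_biUnion, Finset.mem_univ, true_and, Finset.mem_image]
  constructor
  · rintro ⟨j, l', hl', h⟩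
    obtain ⟨rfl, rfl⟩ : j = i ∧ l' = l := by
      constructor <;> [exact congrArg Prod.fst h; exact congrArg Prod.snd h]
    exact hl'
  · intro h; exact ⟨i, l, h, rfl⟩

lemma card_Idx (r : ℕ) : (Idx r).card = 8 * 3 ^ r := by
  rw [Idx, Finset.card_biUnion]
  · have : ∀ i : Fin 8, ((VS (bad i) r).image fun l => (i, l)).card = 3 ^ r := by
      intro i
      rw [Finset.card_image_of_injective _ (fun a b h => congrArg Prod.snd h),
        card_VS _ (card_bad i)]
    rw [Finset.sum_congr rfl fun i _ => this i, Finset.sum_const]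
    simp [Finset.card_univ]
  · intro i _ j _ hij
    rw [Function.onFun, Finset.disjoint_left]
    rintro p hp₁ hp₂
    simp only [Finset.mem_image] at hp₁ hp₂
    obtain ⟨l, _, rfl⟩ := hp₁
    obtain ⟨l', _, h⟩ := hp₂
    exact hij (congrArg Prod.fst h).symm

def phi (r : ℕ) (p : Fin 8 × List LL) : F2 :=
  FreeGroup.mk p.2 * gam p.1 ^ ((2 * r + 2 - 2 * p.2.length) / (cw p.1).length)
    * (FreeGroup.mk p.2)⁻¹

lemma exp_lemma {len t r : ℕ} (hlen : len = 1 ∨ len = 2) (ht : t ≤ r) :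
    ((2 * r + 2 - 2 * t) / len) * len = 2 * r + 2 - 2 * t ∧
      (2 * r + 2 - 2 * t) / len ≠ 0 := by
  rcases hlen with rfl | rfl
  · simp; omega
  · have h : 2 * r + 2 - 2 * t = (r + 1 - t) * 2 := by omega
    rw [h, Nat.mul_div_cancel _ (by norm_num)]
    omega

lemma phi_props {r : ℕ} {p : Fin 8 × List LL} (hp : p ∈ Idx r) :
    (phi r p).toWord = p.2 ++ cp p.1 ((2 * r + 2 - 2 * p.2.length) / (cw p.1).length)
      ++ invRev p.2 ∧ (phi r p).norm = 2 * r + 2 := by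
  obtain ⟨h1, h2, h3⟩ := (mem_VS _ _ _).1 (mem_Idx.1 hp)
  obtain ⟨he1, he2⟩ := exp_lemma (cw_len p.1) h2
  refine ⟨phi_toWord he2 h1 h3, ?_⟩
  rw [phi, phi_norm he2 h1 h3, he1]
  omega

lemma phi_injOn (r : ℕ) : Set.InjOn (phi r) (Idx r) := by
  intro p hp q hq h
  obtain ⟨hpw, _⟩ := phi_props hp
  obtain ⟨hqw, _⟩ := phi_props hq
  obtain ⟨h1p, h2p, _⟩ := (mem_VS _ _ _).1 (mem_Idx.1 hp)
  obtain ⟨h1q, h2q, _⟩ := (mem_VS _ _ _).1 (mem_Idx.1 hq)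
  obtain ⟨hep1, hep2⟩ := exp_lemma (cw_len p.1) h2p
  obtain ⟨heq1, heq2⟩ := exp_lemma (cw_len q.1) h2q
  have hw : p.2 ++ cp p.1 ((2 * r + 2 - 2 * p.2.length) / (cw p.1).length) ++ invRev p.2
      = q.2 ++ cp q.1 ((2 * r + 2 - 2 * q.2.length) / (cw q.1).length) ++ invRev q.2 := by
    rw [← hpw, ← hqw, h]
  obtain ⟨hi, hl⟩ := inj_lists _ _ _ _ _ _ hep2 heq2
    (by rw [hep1]; omega) (by rw [heq1]; omega) hw
  exact Prod.ext hi hl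

lemma zpow_repr (γ : F2) (hγ : γ ∈ ({α, β, α * β} : Set F2)) (k : ℤ) (hk : k ≠ 0) :
    ∃ i₀ : Fin 8, γ ^ k = gam i₀ ^ k.natAbs := by
  have key : ∀ δ : F2, (δ = γ ∨ δ = γ⁻¹) → (∃ i₀ : Fin 8, δ = gam i₀) := by
    intro δ hδ
    rcases hγ with rfl | rfl | rfl <;> rcases hδ with rfl | rfl
    · exact ⟨0, gam0.symm⟩
    · exact ⟨1, gam1.symm⟩
    · exact ⟨2, gam2.symm⟩
    · exact ⟨3, gam3.symm⟩
    · exact ⟨4, gam4.symm⟩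
    · exact ⟨6, gam6.symm⟩
  rcases lt_or_gt_of_ne hk with hneg | hpos
  · obtain ⟨i₀, hi₀⟩ := key γ⁻¹ (Or.inr rfl)
    refine ⟨i₀, ?_⟩
    rw [← hi₀, inv_pow, ← zpow_natCast, ← zpow_neg]
    congr 1
    omega
  · obtain ⟨i₀, hi₀⟩ := key γ (Or.inl rfl)
    refine ⟨i₀, ?_⟩
    rw [← hi₀, ← zpow_natCast]
    congr 1
    omega

lemma gam_cases (i : Fin 8) :
    gam i = α ∨ gam i = α⁻¹ ∨ gam i = β ∨ gam i = β⁻¹ ∨ gam i = α * β ∨ gam i = β * α ∨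
      gam i = (α * β)⁻¹ ∨ gam i = (β * α)⁻¹ := by
  fin_cases i
  · exact Or.inl gam0
  · exact Or.inr (Or.inl gam1)
  · exact Or.inr (Or.inr (Or.inl gam2))
  · exact Or.inr (Or.inr (Or.inr (Or.inl gam3)))
  · exact Or.inr (Or.inr (Or.inr (Or.inr (Or.inl gam4))))
  · exact Or.inr (Or.inr (Or.inr (Or.inr (Or.inr (Or.inl gam5)))))
  · exact Or.inr (Or.inr (Or.inr (Or.inr (Or.inr (Or.inr (Or.inl gam6))))))
  · exact Or.inr (Or.inr (Or.inr (Or.inr (Or.inr (Or.inr (Or.inr gam7))))))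

lemma pow_repr (i : Fin 8) (l : List LL) (e : ℕ) :
    ∃ (w : F2) (k : ℤ) (γ : F2), γ ∈ ({α, β, α * β} : Set F2) ∧
      FreeGroup.mk l * gam i ^ e * (FreeGroup.mk l)⁻¹ = w * γ ^ k * w⁻¹ := by
  have hmem1 : α ∈ ({α, β, α * β} : Set F2) := by left; rfl
  have hmem2 : β ∈ ({α, β, α * β} : Set F2) := by right; left; rfl
  have hmem3 : α * β ∈ ({α, β, α * β} : Set F2) := by right; right; rfl
  have hkonj : β * α = α⁻¹ * (α * β) * (α⁻¹)⁻¹ := by group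
  have key : (β * α) ^ e = α⁻¹ * (α * β) ^ e * α := by
    rw [hkonj, conj_pow]; group
  rcases gam_cases i with h | h | h | h | h | h | h | h
  · exact ⟨FreeGroup.mk l, (e : ℤ), α, hmem1, by rw [h, zpow_natCast]⟩
  · exact ⟨FreeGroup.mk l, -(e : ℤ), α, hmem1,
      by rw [h, zpow_neg, zpow_natCast, inv_pow]⟩
  · exact ⟨FreeGroup.mk l, (e : ℤ), β, hmem2, by rw [h, zpow_natCast]⟩
  · exact ⟨FreeGroup.mk l, -(e : ℤ), β, hmem2,
      by rw [h, zpow_neg, zpow_natCast, inv_pow]⟩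
  · exact ⟨FreeGroup.mk l, (e : ℤ), α * β, hmem3, by rw [h, zpow_natCast]⟩
  · refine ⟨FreeGroup.mk l * α⁻¹, (e : ℤ), α * β, hmem3, ?_⟩
    rw [h, zpow_natCast, key]
    group
  · exact ⟨FreeGroup.mk l, -(e : ℤ), α * β, hmem3,
      by rw [h, zpow_neg, zpow_natCast, inv_pow]⟩
  · refine ⟨FreeGroup.mk l * α⁻¹, -(e : ℤ), α * β, hmem3, ?_⟩
    rw [h, zpow_neg, zpow_natCast, inv_pow, key]
    group

lemma set_eq (r : ℕ) :
    {g : F2 | FreeGroup.norm g = 2 * r + 2 ∧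
      ∃ (w : F2) (k : ℤ) (γ : F2), γ ∈ ({α, β, α * β} : Set F2) ∧
        g = w * γ ^ k * w⁻¹} = ↑((Idx r).image (phi r)) := by
  ext g
  simp only [Set.mem_setOf_eq, Finset.coe_image, Set.mem_image, Finset.mem_coe]
  constructor
  · rintro ⟨hnorm, w, k, γ, hγ, rfl⟩
    have hk : k ≠ 0 := by
      rintro rfl
      simp only [zpow_zero, mul_one, mul_inv_cancel] at hnorm
      rw [FreeGroup.norm_one] at hnorm
      omega
    obtain ⟨i₀, hi₀⟩ := zpow_repr γ hγ k hk
    have hm : k.natAbs ≠ 0 := by omega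
    obtain ⟨l, j, h1, h2, h3, h4⟩ := descent_aux w.norm w i₀ k.natAbs le_rfl
    rw [hi₀, h4] at hnorm ⊢
    have hnorm2 := phi_norm hm h1 h2
    rw [hnorm] at hnorm2
    have hlen := cw_len j
    have hlenpos : 1 ≤ (cw j).length := by rcases hlen with h | h <;> omega
    have ht : l.length ≤ r := by
      rcases hlen with h | h <;> (rw [h] at hnorm2; omega)
    have hexp : (2 * r + 2 - 2 * l.length) / (cw j).length = k.natAbs := by
      have : k.natAbs * (cw j).length = 2 * r + 2 - 2 * l.length := by omega
      rw [← this, Nat.mul_div_cancel _ hlenpos]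
    refine ⟨(j, l), mem_Idx.2 ((mem_VS _ _ _).2 ⟨h1, ht, h2⟩), ?_⟩
    rw [phi]
    simp only
    rw [hexp]
  · rintro ⟨p, hp, rfl⟩
    obtain ⟨_, hnorm⟩ := phi_props hp
    refine ⟨hnorm, ?_⟩
    obtain ⟨w, k, γ, hγ, heq⟩ := pow_repr p.1 p.2 ((2 * r + 2 - 2 * p.2.length) / (cw p.1).length)
    exact ⟨w, k, γ, hγ, heq⟩

/-- The number of elements of word length exactly `2r+2` conjugate to a power of
`α`, `β`, or `αβ` is `8·3^r`. -/
theorem card_reducible_even (r : ℕ) :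
    Nat.card {g : F2 | FreeGroup.norm g = 2 * r + 2 ∧
      ∃ (w : F2) (k : ℤ) (γ : F2), γ ∈ ({α, β, α * β} : Set F2) ∧
        g = w * γ ^ k * w⁻¹} = 8 * 3 ^ r := by
  rw [set_eq r, Nat.card_coe_set_eq, Set.ncard_coe_finset,
    Finset.card_image_of_injOn (phi_injOn r), card_Idx r]
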